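/- Let H be a Hermitian matrix. The vector of diagonal entries of H, arranged in decreasing order, equals the vector of eigenvalues of H (in decreasing order) if and only if H is diagonal. -/

import Mathlib

/-- Sort a list of reals in decreasing order. -/
noncomputable def sortDesc (l : List ℝ) : List ℝ :=
  ((l : Multiset ℝ).sort (· ≤ ·)).reverse

open Matrix Polynomial

-- charpoly invariance under conjugation
lemma charpoly_conj_aux {n : ℕ} (U D V : Matrix (Fin n) (Fin n) ℂ)
    (h1 : U * V = 1) (h2 : V * U = 1) :
    (U * D * V).charpoly = D.charpoly := by
  have h1' : U.map C * V.map C = 1 := by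
    rw [← Matrix.map_mul, h1, Matrix.map_one _ (map_zero _) (map_one _)]
  have h2' : V.map C * U.map C = 1 := by
    rw [← Matrix.map_mul, h2, Matrix.map_one _ (map_zero _) (map_one _)]
  have key : charmatrix (U * D * V) = U.map C * charmatrix D * V.map C := by
    unfold charmatrix
    simp only [RingHom.mapMatrix_apply]
    rw [Matrix.map_mul, Matrix.map_mul, mul_sub, sub_mul]
    congr 1
    have : U.map C * Matrix.scalar (Fin n) (X : ℂ[X]) = Matrix.scalar (Fin n) X * U.map C := by
      exact (Matrix.scalar_commute (X : ℂ[X]) (fun r' => Commute.all _ _) (U.map C)).symm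
    rw [this, mul_assoc, h1', mul_one]
  rw [Matrix.charpoly, key, det_mul, det_mul, Matrix.charpoly]
  rw [mul_comm, ← mul_assoc, ← det_mul, h2', det_one, one_mul]

-- charpoly of a Hermitian matrix in terms of eigenvalues
lemma charpoly_eq_prod_eigenvalues {n : ℕ} (H : Matrix (Fin n) (Fin n) ℂ)
    (hH : H.IsHermitian) :
    H.charpoly = ∏ i, (X - C ((hH.eigenvalues i : ℂ))) := by
  set U : Matrix (Fin n) (Fin n) ℂ := (hH.eigenvectorUnitary : Matrix (Fin n) (Fin n) ℂ)
  have h1 : U * star U = 1 := Matrix.mem_unitaryGroup_iff.mp hH.eigenvectorUnitary.2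
  have h2 : star U * U = 1 := Matrix.mem_unitaryGroup_iff'.mp hH.eigenvectorUnitary.2
  have hs := hH.spectral_theorem
  conv_lhs => rw [hs]
  rw [Unitary.conjStarAlgAut_apply]
  erw [charpoly_conj_aux _ _ _ h1 h2]
  rw [Matrix.charpoly_of_upperTriangular _ (Matrix.blockTriangular_diagonal _)]
  simp [Function.comp]

-- charpoly of a diagonal matrix
lemma charpoly_eq_prod_diag {n : ℕ} (H : Matrix (Fin n) (Fin n) ℂ) (hd : H.IsDiag) :
    H.charpoly = ∏ i, (X - C (H i i)) := by
  exact Matrix.charpoly_of_upperTriangular _ (fun i j hij => hd (ne_of_gt hij))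

lemma prod_X_sub_C_inj {n : ℕ} (f g : Fin n → ℂ)
    (h : (∏ i, (X - C (f i))) = ∏ i, (X - C (g i))) :
    Multiset.map f Finset.univ.val = Multiset.map g Finset.univ.val := by
  have hf : (∏ i, (X - C (f i))) =
      ((Multiset.map f Finset.univ.val).map fun a => X - C a).prod := by
    rw [Multiset.map_map]; rfl
  have hg : (∏ i, (X - C (g i))) =
      ((Multiset.map g Finset.univ.val).map fun a => X - C a).prod := by
    rw [Multiset.map_map]; rfl
  have := congrArg Polynomial.roots (hf.symm.trans (h.trans hg))
  rwa [Polynomial.roots_multiset_prod_X_sub_C, Polynomial.roots_multiset_prod_X_sub_C] at this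

lemma sortDesc_eq_iff (l l' : List ℝ) :
    sortDesc l = sortDesc l' ↔ (l : Multiset ℝ) = (l' : Multiset ℝ) := by
  constructor
  · intro h
    have h2 := congrArg (fun t : List ℝ => ((t.reverse : List ℝ) : Multiset ℝ)) h
    simp only [sortDesc, List.reverse_reverse] at h2
    rwa [Multiset.sort_eq, Multiset.sort_eq] at h2
  · intro h; simp [sortDesc, h]

lemma ofFn_coe_eq_map {α : Type*} {n : ℕ} (f : Fin n → α) :
    ((List.ofFn f : List α) : Multiset α) = Multiset.map f Finset.univ.val := by
  rw [List.ofFn_eq_map]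
  rfl

lemma sum_normSq_eq_sum_eigenvalues_sq {n : ℕ} (H : Matrix (Fin n) (Fin n) ℂ)
    (hH : H.IsHermitian) :
    ∑ i, ∑ j, Complex.normSq (H i j) = ∑ i, (hH.eigenvalues i) ^ 2 := by
  set U : Matrix (Fin n) (Fin n) ℂ := (hH.eigenvectorUnitary : Matrix (Fin n) (Fin n) ℂ) with hU
  set D : Matrix (Fin n) (Fin n) ℂ := Matrix.diagonal (RCLike.ofReal ∘ hH.eigenvalues) with hD
  have h2 : star U * U = 1 := Matrix.mem_unitaryGroup_iff'.mp hH.eigenvectorUnitary.2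
  have hs : H = U * D * star U := hH.spectral_theorem
  have hsq : H * H = U * (D * D) * star U := by
    conv_lhs => rw [hs]
    simp only [mul_assoc]
    rw [← mul_assoc (star U) U, h2, one_mul]
  have t1 : (H * H).trace = ∑ i, ((hH.eigenvalues i : ℂ)) ^ 2 := by
    rw [hsq, Matrix.trace_mul_cycle, ← mul_assoc, h2, one_mul, hD,
      Matrix.diagonal_mul_diagonal, Matrix.trace_diagonal]
    simp [sq]
  have t2 : (H * H).trace = ∑ i, ∑ j, (Complex.normSq (H i j) : ℂ) := by
    rw [Matrix.trace]
    congr 1; ext i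
    rw [Matrix.diag_apply, Matrix.mul_apply]
    congr 1; ext j
    rw [show H j i = star (H i j) from (star_star (H j i)) ▸ congrArg star (hH.apply i j)]
    exact Complex.mul_conj (H i j)
  have := t1.symm.trans t2
  have h3 : ((∑ i, (hH.eigenvalues i) ^ 2 : ℝ) : ℂ) = ((∑ i, ∑ j, Complex.normSq (H i j) : ℝ) : ℂ) := by
    push_cast
    exact this
  exact_mod_cast h3.symm

/-- For a Hermitian matrix `H`, the diagonal entries arranged decreasingly
equal the eigenvalues arranged decreasingly iff `H` is a diagonal matrix. -/
theorem diag_eq_spec_iff_isDiag {n : ℕ} (H : Matrix (Fin n) (Fin n) ℂ)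
    (hH : H.IsHermitian) :
    sortDesc (List.ofFn fun i => (H i i).re) = sortDesc (List.ofFn hH.eigenvalues) ↔
      H.IsDiag := by
  constructor
  · intro h
    rw [sortDesc_eq_iff, ofFn_coe_eq_map, ofFn_coe_eq_map] at h
    have hsum : ∑ i, ((H i i).re) ^ 2 = ∑ i, (hH.eigenvalues i) ^ 2 := by
      have h2 := congrArg (fun s : Multiset ℝ => (s.map (fun x => x ^ 2)).sum) h
      simp only [Multiset.map_map] at h2
      exact h2
    have him : ∀ i, (H i i).im = 0 := by
      intro i
      have h3 := congrArg Complex.im (hH.apply i i)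
      simp only [Complex.star_def, Complex.conj_im] at h3
      linarith
    have hdiag : ∀ i, Complex.normSq (H i i) = ((H i i).re) ^ 2 := by
      intro i
      rw [Complex.normSq_apply, him]
      ring
    have key : ∑ i, ∑ j, Complex.normSq (H i j) = ∑ i, Complex.normSq (H i i) := by
      rw [sum_normSq_eq_sum_eigenvalues_sq H hH, ← hsum]
      simp [hdiag]
    have hoff : ∑ i, ∑ j ∈ Finset.univ.erase i, Complex.normSq (H i j) = 0 := by
      have expand : ∀ i : Fin n, ∑ j, Complex.normSq (H i j) =
          Complex.normSq (H i i) + ∑ j ∈ Finset.univ.erase i, Complex.normSq (H i j) :=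
        fun i => (Finset.add_sum_erase _ _ (Finset.mem_univ i)).symm
      simp only [expand, Finset.sum_add_distrib] at key
      linarith
    intro i j hij
    have h1 := (Finset.sum_eq_zero_iff_of_nonneg
      (fun i _ => Finset.sum_nonneg fun j _ => Complex.normSq_nonneg _)).mp hoff i
      (Finset.mem_univ i)
    have h2 := (Finset.sum_eq_zero_iff_of_nonneg
      (fun j _ => Complex.normSq_nonneg _)).mp h1 j
      (Finset.mem_erase.mpr ⟨Ne.symm hij, Finset.mem_univ j⟩)
    exact Complex.normSq_eq_zero.mp h2
  · intro hd
    rw [sortDesc_eq_iff, ofFn_coe_eq_map, ofFn_coe_eq_map]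
    have h := prod_X_sub_C_inj (fun i => H i i) (fun i => (hH.eigenvalues i : ℂ))
      ((charpoly_eq_prod_diag H hd).symm.trans (charpoly_eq_prod_eigenvalues H hH))
    have h2 := congrArg (Multiset.map Complex.re) h
    simpa [Multiset.map_map, Function.comp_def] using h2
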